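/- Let 0 < θ_* < 1, M ≥ 2, and let p̃(x|θ) = C(M,x) θ^x (1-θ)^{M-x} be the binomial Bin(M,θ) pmf. Let H ≥ 2, T_1, ..., T_{H-1} ∈ (0,1) with ∑ T_i ≤ 1, T_H := 1 - ∑_{i=1}^{H-1} T_i > 0, and suppose θ_1, ..., θ_H ∈ (0,1) satisfy ∑_{i=1}^H T_i · p̃(x|θ_i) = p̃(x|θ_*) for all x ∈ {0,1,...,M}. Then θ_1 = ··· = θ_H = θ_*. -/

import Mathlib

/-- Binomial pmf `Bin(M, θ)` as a function of `x` and `θ`. -/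
noncomputable def binomPMF (M : ℕ) (x : ℕ) (θ : ℝ) : ℝ :=
  (M.choose x : ℝ) * θ ^ x * (1 - θ) ^ (M - x)

lemma binom_moment (M k : ℕ) (hk : k ≤ M) (θ : ℝ) :
    ∑ x ∈ Finset.range (M+1), (x.choose k : ℝ) * binomPMF M x θ
      = (M.choose k : ℝ) * θ ^ k := by
  have split : Finset.range (M+1) = Finset.range k ∪ Finset.Ico k (M+1) := by
    rw [Finset.range_eq_Ico, Finset.range_eq_Ico, Finset.Ico_union_Ico_eq_Ico (Nat.zero_le _) (by omega)]
  rw [split, Finset.sum_union (by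
      simp [Finset.disjoint_left, Finset.mem_Ico]; omega)]
  have h1 : ∑ x ∈ Finset.range k, (x.choose k : ℝ) * binomPMF M x θ = 0 := by
    apply Finset.sum_eq_zero
    intro x hx
    rw [Nat.choose_eq_zero_of_lt (Finset.mem_range.mp hx)]
    simp
  rw [h1, zero_add]
  have h2 : ∑ x ∈ Finset.Ico k (M+1), (x.choose k : ℝ) * binomPMF M x θ
      = ∑ j ∈ Finset.range (M-k+1),
          (M.choose k : ℝ) * ((M-k).choose j : ℝ) * θ ^ (k+j) * (1-θ) ^ (M-k-j) := by
    rw [Finset.sum_Ico_eq_sum_range]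
    apply Finset.sum_congr (by congr 1; omega)
    intro j hj
    simp only [Finset.mem_range] at hj
    have hjk : k + j ≤ M := by omega
    unfold binomPMF
    have hc : ((k+j).choose k : ℝ) * (M.choose (k+j) : ℝ)
        = (M.choose k : ℝ) * ((M-k).choose j : ℝ) := by
      have := Nat.choose_mul (n := M) (Nat.le_add_right k j)
      have h' : M.choose (k+j) * (k+j).choose k = M.choose k * (M-k).choose j := by
        simpa using this
      exact_mod_cast by rw [mul_comm]; exact_mod_cast congrArg (Nat.cast (R := ℝ)) h'
    have hMx : M - (k + j) = M - k - j := by omega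
    rw [hMx]
    linear_combination θ ^ (k+j) * (1-θ) ^ (M-k-j) * hc
  rw [h2]
  have hbin : ∑ j ∈ Finset.range (M-k+1),
      ((M-k).choose j : ℝ) * θ ^ j * (1-θ) ^ (M-k-j) = 1 := by
    calc ∑ j ∈ Finset.range (M-k+1), ((M-k).choose j : ℝ) * θ ^ j * (1-θ) ^ (M-k-j)
        = ∑ j ∈ Finset.range (M-k+1), θ ^ j * (1-θ) ^ (M-k-j) * ((M-k).choose j : ℝ) := by
          apply Finset.sum_congr rfl; intro j hj; ring
      _ = (θ + (1-θ)) ^ (M-k) := (add_pow θ (1-θ) (M-k)).symm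
      _ = 1 := by norm_num
  calc ∑ j ∈ Finset.range (M-k+1),
      (M.choose k : ℝ) * ((M-k).choose j : ℝ) * θ ^ (k+j) * (1-θ) ^ (M-k-j)
      = (M.choose k : ℝ) * θ ^ k * ∑ j ∈ Finset.range (M-k+1),
          ((M-k).choose j : ℝ) * θ ^ j * (1-θ) ^ (M-k-j) := by
        rw [Finset.mul_sum]
        apply Finset.sum_congr rfl
        intro j hj
        rw [pow_add]; ring
    _ = (M.choose k : ℝ) * θ ^ k := by rw [hbin, mul_one]

theorem binomial_mixture_identifiable
    (M : ℕ) (hM : 2 ≤ M) (θs : ℝ) (hθs : 0 < θs ∧ θs < 1)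
    (H : ℕ) (hH : 2 ≤ H)
    (T : Fin H → ℝ) (hTpos : ∀ i, 0 < T i) (hTlt : ∀ i, T i < 1)
    (hTsum : ∑ i, T i = 1)
    (θ : Fin H → ℝ) (hθ : ∀ i, 0 < θ i ∧ θ i < 1)
    (hmix : ∀ x : ℕ, x ≤ M → ∑ i, T i * binomPMF M x (θ i) = binomPMF M x θs) :
    ∀ i, θ i = θs := by
  have key : ∀ k, k ≤ M → ∑ i, T i * θ i ^ k = θs ^ k := by
    intro k hk
    have hc : (M.choose k : ℝ) ≠ 0 := by
      exact_mod_cast Nat.choose_pos hk |>.ne'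
    have h1 : ∑ x ∈ Finset.range (M+1), (x.choose k : ℝ) * (∑ i, T i * binomPMF M x (θ i))
        = (M.choose k : ℝ) * θs ^ k := by
      rw [← binom_moment M k hk θs]
      apply Finset.sum_congr rfl
      intro x hx
      rw [hmix x (Nat.lt_succ_iff.mp (Finset.mem_range.mp hx))]
    have h2 : ∑ x ∈ Finset.range (M+1), (x.choose k : ℝ) * (∑ i, T i * binomPMF M x (θ i))
        = (M.choose k : ℝ) * ∑ i, T i * θ i ^ k := by
      simp_rw [Finset.mul_sum]
      rw [Finset.sum_comm]
      apply Finset.sum_congr rfl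
      intro i _
      have : ∑ x ∈ Finset.range (M+1), (x.choose k : ℝ) * (T i * binomPMF M x (θ i))
          = T i * ∑ x ∈ Finset.range (M+1), (x.choose k : ℝ) * binomPMF M x (θ i) := by
        rw [Finset.mul_sum]; apply Finset.sum_congr rfl; intro x _; ring
      rw [this, binom_moment M k hk (θ i)]; ring
    have := h1.symm.trans h2
    exact (mul_left_cancel₀ hc this).symm
  have m1 := key 1 (by omega)
  have m2 := key 2 hM
  have hzero : ∑ i, T i * (θ i - θs)^2 = 0 := by
    have expand : ∑ i, T i * (θ i - θs)^2
        = ∑ i, (T i * θ i ^ 2 - 2*θs*(T i * θ i ^ 1) + θs^2 * T i) := by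
      apply Finset.sum_congr rfl; intro i _; ring
    rw [expand, Finset.sum_add_distrib, Finset.sum_sub_distrib, ← Finset.mul_sum,
      ← Finset.mul_sum, m1, m2, hTsum]
    ring
  intro i
  have hterm : T i * (θ i - θs)^2 = 0 := by
    have := (Finset.sum_eq_zero_iff_of_nonneg (fun j _ =>
      mul_nonneg (hTpos j).le (sq_nonneg _))).mp hzero i (Finset.mem_univ i)
    exact this
  have : (θ i - θs)^2 = 0 := by
    rcases mul_eq_zero.mp hterm with h | h
    · exact absurd h (hTpos i).ne'
    · exact h
  have := pow_eq_zero_iff (n := 2) (by norm_num) |>.mp this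
  linarith [this]
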